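/- Let b : ℕ → ℂ with b_n → 0 as n → ∞. Then there exist a set S ⊆ ℂ having no accumulation point in ℂ, and a function F holomorphic on ℂ \ S, such that the convergents U_n(t)/V_n(t) converge to F locally uniformly on ℂ \ S; thus the continued fraction converges to a function meromorphic on ℂ. (Van Vleck's extension of Stieltjes' theorem to complex coefficients; unlike the real positive case, the condition b_n → 0 is sufficient but not necessary.) -/

import Mathlib

open Filter Topology Metric

noncomputable section
namespace VanVleck

/-- depth-k tail continued fraction `b m t/(1 + b (m+1) t/(1 + ...))`. -/
def tau (b : ℕ → ℂ) : ℕ → ℕ → ℂ → ℂ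
  | 0, _, _ => 0
  | k+1, m, t => b m * t / (1 + tau b k (m+1) t)

variable {b : ℕ → ℂ} {t : ℂ}

lemma norm_tau_le (k : ℕ) : ∀ m, (∀ j, m ≤ j → ‖b j‖ * ‖t‖ ≤ 1/8) →
    ‖tau b k m t‖ ≤ 1/2 := by
  induction k with
  | zero => intro m _; simp [tau]
  | succ k ih =>
    intro m H
    have H' : ∀ j, m+1 ≤ j → ‖b j‖ * ‖t‖ ≤ 1/8 := fun j hj => H j (by omega)
    have h1 : ‖tau b k (m+1) t‖ ≤ 1/2 := ih (m+1) H'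
    have h2 : (1:ℝ)/2 ≤ ‖1 + tau b k (m+1) t‖ := by
      have := norm_add_le (1 + tau b k (m+1) t) (-(tau b k (m+1) t))
      simp only [add_neg_cancel_right, norm_neg, norm_one] at this
      linarith [this]
    have h3 : ‖b m * t‖ ≤ 1/8 := by rw [norm_mul]; exact H m le_rfl
    show ‖b m * t / (1 + tau b k (m+1) t)‖ ≤ 1/2
    rw [norm_div]
    calc ‖b m * t‖ / ‖1 + tau b k (m+1) t‖ ≤ (1/8) / (1/2) :=
          div_le_div₀ (by norm_num) h3 (by norm_num) h2
      _ ≤ 1/2 := by norm_num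

lemma norm_one_add_tau (k m : ℕ) (H : ∀ j, m ≤ j → ‖b j‖ * ‖t‖ ≤ 1/8) :
    (1:ℝ)/2 ≤ ‖1 + tau b k m t‖ := by
  have h1 := norm_tau_le (b := b) (t := t) k m H
  have := norm_add_le (1 + tau b k m t) (-(tau b k m t))
  simp only [add_neg_cancel_right, norm_neg, norm_one] at this
  linarith

lemma one_add_tau_ne (k m : ℕ) (H : ∀ j, m ≤ j → ‖b j‖ * ‖t‖ ≤ 1/8) :
    (1 : ℂ) + tau b k m t ≠ 0 := by
  intro h
  have := norm_one_add_tau (b := b) (t := t) k m H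
  rw [h] at this; simp at this; linarith

lemma dist_tau_succ (k : ℕ) : ∀ m, (∀ j, m ≤ j → ‖b j‖ * ‖t‖ ≤ 1/8) →
    dist (tau b k m t) (tau b (k+1) m t) ≤ (1/8) * (1/2)^k := by
  induction k with
  | zero =>
    intro m H
    simp only [tau, dist_eq_norm, pow_zero, mul_one]
    rw [add_zero, zero_sub, norm_neg, norm_div, norm_one, div_one, norm_mul]
    exact H m le_rfl
  | succ k ih =>
    intro m H
    have H' : ∀ j, m+1 ≤ j → ‖b j‖ * ‖t‖ ≤ 1/8 := fun j hj => H j (by omega)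
    have hA : (1:ℂ) + tau b k (m+1) t ≠ 0 := one_add_tau_ne k (m+1) H'
    have hB : (1:ℂ) + tau b (k+1) (m+1) t ≠ 0 := one_add_tau_ne (k+1) (m+1) H'
    have hAn := norm_one_add_tau (b := b) (t := t) k (m+1) H'
    have hBn := norm_one_add_tau (b := b) (t := t) (k+1) (m+1) H'
    have key : tau b (k+1) m t - tau b (k+2) m t
        = b m * t * (tau b (k+1) (m+1) t - tau b k (m+1) t)
          / ((1 + tau b k (m+1) t) * (1 + tau b (k+1) (m+1) t)) := by
      show b m * t / (1 + tau b k (m+1) t) - b m * t / (1 + tau b (k+1) (m+1) t) = _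
      field_simp
      ring
    rw [dist_eq_norm, key, norm_div, norm_mul, norm_mul, norm_mul]
    have hd : ‖tau b (k+1) (m+1) t - tau b k (m+1) t‖ ≤ (1/8) * (1/2)^k := by
      have := ih (m+1) H'
      rwa [dist_comm, dist_eq_norm] at this
    have hbm : ‖b m‖ * ‖t‖ ≤ 1/8 := H m le_rfl
    have hden : (1:ℝ)/4 ≤ ‖1 + tau b k (m+1) t‖ * ‖1 + tau b (k+1) (m+1) t‖ := by
      nlinarith
    have step1 : ‖b m‖ * ‖t‖ * ‖tau b (k+1) (m+1) t - tau b k (m+1) t‖ /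
          (‖1 + tau b k (m+1) t‖ * ‖1 + tau b (k+1) (m+1) t‖)
        ≤ ((1/8) * ((1/8) * (1/2)^k)) / (1/4) := by
      apply div_le_div₀ (by positivity) ?_ (by norm_num) hden
      have h0 : (0:ℝ) ≤ ‖tau b (k+1) (m+1) t - tau b k (m+1) t‖ := norm_nonneg _
      nlinarith [norm_nonneg (b m), norm_nonneg t, mul_nonneg (norm_nonneg (b m)) (norm_nonneg t)]
    have step2 : ((1/8) * ((1/8) * (1/2)^k)) / (1/4) ≤ (1/8) * ((1/2):ℝ)^(k+1) := by
      rw [pow_succ]; nlinarith [pow_pos (by norm_num : (0:ℝ) < 1/2) k]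
    linarith

/-- the limit of the tail continued fractions -/
def gl (b : ℕ → ℂ) (m : ℕ) (t : ℂ) : ℂ := limUnder atTop (fun k => tau b k m t)

lemma tendsto_tau_gl (m : ℕ) (H : ∀ j, m ≤ j → ‖b j‖ * ‖t‖ ≤ 1/8) :
    Tendsto (fun k => tau b k m t) atTop (𝓝 (gl b m t)) := by
  refine (cauchySeq_of_le_geometric (1/2) (1/8) (by norm_num)
    (fun k => dist_tau_succ k m H)).tendsto_limUnder

lemma dist_tau_gl (k m : ℕ) (H : ∀ j, m ≤ j → ‖b j‖ * ‖t‖ ≤ 1/8) :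
    dist (tau b k m t) (gl b m t) ≤ (1/4) * (1/2)^k := by
  have := dist_le_of_le_geometric_of_tendsto (1/2) (1/8) (by norm_num)
    (fun k => dist_tau_succ k m H) (tendsto_tau_gl m H) k
  calc dist (tau b k m t) (gl b m t) ≤ 1/8 * (1/2)^k / (1 - 1/2) := this
    _ = (1/4) * (1/2)^k := by ring

lemma norm_gl_le (m : ℕ) (H : ∀ j, m ≤ j → ‖b j‖ * ‖t‖ ≤ 1/8) :
    ‖gl b m t‖ ≤ 1/2 :=
  le_of_tendsto ((tendsto_tau_gl m H).norm)
    (Eventually.of_forall fun k => norm_tau_le k m H)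

lemma norm_one_add_gl (m : ℕ) (H : ∀ j, m ≤ j → ‖b j‖ * ‖t‖ ≤ 1/8) :
    (1:ℝ)/2 ≤ ‖1 + gl b m t‖ := by
  have h1 := norm_gl_le m H
  have := norm_add_le (1 + gl b m t) (-(gl b m t))
  simp only [add_neg_cancel_right, norm_neg, norm_one] at this
  linarith

lemma one_add_gl_ne (m : ℕ) (H : ∀ j, m ≤ j → ‖b j‖ * ‖t‖ ≤ 1/8) :
    (1 : ℂ) + gl b m t ≠ 0 := by
  intro h
  have := norm_one_add_gl m H
  rw [h] at this; simp at this; linarith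

lemma gl_rec (m : ℕ) (H : ∀ j, m ≤ j → ‖b j‖ * ‖t‖ ≤ 1/8) :
    gl b m t = b m * t / (1 + gl b (m+1) t) := by
  have H' : ∀ j, m+1 ≤ j → ‖b j‖ * ‖t‖ ≤ 1/8 := fun j hj => H j (by omega)
  have h1 : Tendsto (fun k => tau b (k+1) m t) atTop (𝓝 (gl b m t)) :=
    (tendsto_tau_gl m H).comp (tendsto_add_atTop_nat 1)
  have h2 : Tendsto (fun k => tau b (k+1) m t) atTop
      (𝓝 (b m * t / (1 + gl b (m+1) t))) := by
    have : Tendsto (fun k => (1:ℂ) + tau b k (m+1) t) atTop (𝓝 (1 + gl b (m+1) t)) :=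
      tendsto_const_nhds.add (tendsto_tau_gl (m+1) H')
    simpa [tau] using (by have h := Tendsto.div (f := fun _ : ℕ => b m * t) tendsto_const_nhds this (one_add_gl_ne (m+1) H'); exact h : Tendsto (fun k => b m * t / (1 + tau b k (m+1) t)) atTop _)
  exact tendsto_nhds_unique h1 h2

lemma tau_zero_t (k : ℕ) : ∀ m, tau b k m (0:ℂ) = 0 := by
  induction k with
  | zero => intro m; simp [tau]
  | succ k ih => intro m; simp [tau]

lemma gl_zero_t (m : ℕ) : gl b m (0:ℂ) = 0 := by
  have H : ∀ j, m ≤ j → ‖b j‖ * ‖(0:ℂ)‖ ≤ 1/8 := by intro j _; simp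
  have h1 := tendsto_tau_gl (b := b) (t := (0:ℂ)) m H
  simp only [tau_zero_t] at h1
  exact tendsto_nhds_unique h1 tendsto_const_nhds

section Ball

variable {R : ℝ} {m0 : ℕ}

lemma bnd_of_mem_ball (HR : ∀ j, m0 ≤ j → ‖b j‖ * R ≤ 1/8) {t : ℂ}
    (ht : t ∈ ball (0:ℂ) R) {m : ℕ} (hm : m0 ≤ m) :
    ∀ j, m ≤ j → ‖b j‖ * ‖t‖ ≤ 1/8 := by
  intro j hj
  have h1 : ‖t‖ < R := by simpa using mem_ball_zero_iff.mp ht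
  calc ‖b j‖ * ‖t‖ ≤ ‖b j‖ * R :=
        mul_le_mul_of_nonneg_left h1.le (norm_nonneg _)
    _ ≤ 1/8 := HR j (le_trans hm hj)

lemma diff_tau (HR : ∀ j, m0 ≤ j → ‖b j‖ * R ≤ 1/8) (k : ℕ) :
    ∀ m, m0 ≤ m → DifferentiableOn ℂ (fun t => tau b k m t) (ball (0:ℂ) R) := by
  induction k with
  | zero => intro m _; simp only [tau]; exact differentiableOn_const 0
  | succ k ih =>
    intro m hm
    have hm' : m0 ≤ m + 1 := by omega
    show DifferentiableOn ℂ (fun t => b m * t / (1 + tau b k (m+1) t)) (ball (0:ℂ) R)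
    apply DifferentiableOn.div
    · exact (differentiable_id.const_mul _).differentiableOn
    · exact (differentiableOn_const 1).add (ih (m+1) hm')
    · intro t ht
      exact one_add_tau_ne k (m+1) (bnd_of_mem_ball HR ht hm')

lemma unif_tau_gl (HR : ∀ j, m0 ≤ j → ‖b j‖ * R ≤ 1/8) {m : ℕ} (hm : m0 ≤ m) :
    TendstoUniformlyOn (fun k t => tau b k m t) (gl b m) atTop (ball (0:ℂ) R) := by
  rw [Metric.tendstoUniformlyOn_iff]
  intro ε hε
  have h2 : Tendsto (fun k : ℕ => (1/4 : ℝ) * (1/2)^k) atTop (𝓝 0) := by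
    simpa using (tendsto_pow_atTop_nhds_zero_of_lt_one (by norm_num : (0:ℝ) ≤ 1/2)
      (by norm_num)).const_mul (1/4 : ℝ)
  filter_upwards [h2.eventually (gt_mem_nhds hε)] with k hk t ht
  have := dist_tau_gl (b := b) (t := t) k m (bnd_of_mem_ball HR ht hm)
  rw [dist_comm] at this
  exact lt_of_le_of_lt this hk

lemma diff_gl (HR : ∀ j, m0 ≤ j → ‖b j‖ * R ≤ 1/8) {m : ℕ} (hm : m0 ≤ m) :
    DifferentiableOn ℂ (gl b m) (ball (0:ℂ) R) :=
  ((unif_tau_gl HR hm).tendstoLocallyUniformlyOn).differentiableOn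
    (Eventually.of_forall fun k => diff_tau HR k m hm) isOpen_ball

end Ball

section Identities

/-- correction product for finite depth -/
def Pk (b : ℕ → ℂ) : ℕ → ℕ → ℂ → ℂ
  | 0, _, _ => 1
  | k+1, m, t => (1 + tau b k (m+1) t) * Pk b k (m+1) t

lemma Pk_ne (k : ℕ) : ∀ m, (∀ j, m ≤ j → ‖b j‖ * ‖t‖ ≤ 1/8) → Pk b k m t ≠ 0 := by
  induction k with
  | zero => intro m _; simp [Pk]
  | succ k ih =>
    intro m H
    have H' : ∀ j, m+1 ≤ j → ‖b j‖ * ‖t‖ ≤ 1/8 := fun j hj => H j (by omega)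
    exact mul_ne_zero (one_add_tau_ne k (m+1) H') (ih (m+1) H')

/-- The key identity expressing `W (m+k)` via the tail `tau`. -/
lemma pair_identity {W : ℕ → ℂ → ℂ}
    (hW : ∀ n t, W (n + 2) t = W (n + 1) t + b (n + 1) * t * W n t) (k : ℕ) :
    ∀ m, 1 ≤ m → (∀ j, m ≤ j → ‖b j‖ * ‖t‖ ≤ 1/8) →
      (W m t + tau b k m t * W (m-1) t) * Pk b k m t = W (m+k) t := by
  induction k with
  | zero => intro m _ _; simp [tau, Pk]
  | succ k ih =>
    intro m hm H
    obtain ⟨n, rfl⟩ : ∃ n, m = n + 1 := ⟨m - 1, by omega⟩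
    have H' : ∀ j, n+2 ≤ j → ‖b j‖ * ‖t‖ ≤ 1/8 := fun j hj => H j (by omega)
    have hA : (1:ℂ) + tau b k (n+2) t ≠ 0 := one_add_tau_ne k (n+2) H'
    have hrec : W (n+2) t = W (n+1) t + b (n+1) * t * W n t := hW n t
    have e1 : (W (n+1) t + tau b (k+1) (n+1) t * W (n+1-1) t) * Pk b (k+1) (n+1) t
        = (W (n+2) t + tau b k (n+2) t * W (n+2-1) t) * Pk b k (n+2) t := by
      show (W (n+1) t + b (n+1) * t / (1 + tau b k (n+2) t) * W n t) *
          ((1 + tau b k (n+2) t) * Pk b k (n+2) t)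
        = (W (n+2) t + tau b k (n+2) t * W (n+1) t) * Pk b k (n+2) t
      rw [hrec]; field_simp; ring
    rw [e1, ih (n+2) (by omega) H']
    congr 1; omega

/-- correction product between two base points, for the limiting tails. -/
def Pg (b : ℕ → ℂ) : ℕ → ℕ → ℂ → ℂ
  | 0, _, _ => 1
  | s+1, m, t => (1 + gl b (m+1) t)⁻¹ * Pg b s (m+1) t

lemma Pg_ne (s : ℕ) : ∀ m, (∀ j, m ≤ j → ‖b j‖ * ‖t‖ ≤ 1/8) → Pg b s m t ≠ 0 := by
  induction s with
  | zero => intro m _; simp [Pg]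
  | succ s ih =>
    intro m H
    have H' : ∀ j, m+1 ≤ j → ‖b j‖ * ‖t‖ ≤ 1/8 := fun j hj => H j (by omega)
    exact mul_ne_zero (inv_ne_zero (one_add_gl_ne (m+1) H')) (ih (m+1) H')

lemma chain_identity {W : ℕ → ℂ → ℂ}
    (hW : ∀ n t, W (n + 2) t = W (n + 1) t + b (n + 1) * t * W n t) (s : ℕ) :
    ∀ m, 1 ≤ m → (∀ j, m ≤ j → ‖b j‖ * ‖t‖ ≤ 1/8) →
      W m t + gl b m t * W (m-1) t
        = (W (m+s) t + gl b (m+s) t * W (m+s-1) t) * Pg b s m t := by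
  induction s with
  | zero => intro m _ _; simp [Pg]
  | succ s ih =>
    intro m hm H
    obtain ⟨n, rfl⟩ : ∃ n, m = n + 1 := ⟨m - 1, by omega⟩
    have H' : ∀ j, n+2 ≤ j → ‖b j‖ * ‖t‖ ≤ 1/8 := fun j hj => H j (by omega)
    have hA : (1:ℂ) + gl b (n+2) t ≠ 0 := one_add_gl_ne (n+2) H'
    have hrec : W (n+2) t = W (n+1) t + b (n+1) * t * W n t := hW n t
    have hg : gl b (n+1) t = b (n+1) * t / (1 + gl b (n+2) t) := gl_rec (n+1) H
    have e1 : W (n+1) t + gl b (n+1) t * W (n+1-1) t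
        = (W (n+2) t + gl b (n+2) t * W (n+2-1) t) * (1 + gl b (n+2) t)⁻¹ := by
      rw [hg, hrec]
      show W (n+1) t + b (n+1) * t / (1 + gl b (n+2) t) * W n t
        = (W (n+1) t + b (n+1) * t * W n t + gl b (n+2) t * W (n+1) t) * (1 + gl b (n+2) t)⁻¹
      field_simp; ring
    rw [e1, ih (n+2) (by omega) H']
    show _ = (W (n+1+(s+1)) t + gl b (n+1+(s+1)) t * W (n+1+(s+1)-1) t) *
      ((1 + gl b (n+1+1) t)⁻¹ * Pg b s (n+1+1) t)
    have : n+1+(s+1) = n+2+s := by omega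
    rw [this]; ring_nf

end Identities

section Poly

lemma diff_W {W : ℕ → ℂ → ℂ}
    (h0 : Differentiable ℂ (W 0)) (h1 : Differentiable ℂ (W 1))
    (hW : ∀ n t, W (n + 2) t = W (n + 1) t + b (n + 1) * t * W n t) :
    ∀ n, Differentiable ℂ (W n) := by
  have key : ∀ n, Differentiable ℂ (W n) ∧ Differentiable ℂ (W (n+1)) := by
    intro n
    induction n with
    | zero => exact ⟨h0, h1⟩
    | succ n ih =>
      refine ⟨ih.2, ?_⟩
      have : W (n+2) = fun t => W (n+1) t + b (n+1) * t * W n t := funext (hW n)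
      rw [this]
      exact ih.2.add (((differentiable_const _).mul differentiable_id).mul ih.1)
  exact fun n => (key n).1

lemma W_zero_eq {W : ℕ → ℂ → ℂ} {c : ℂ}
    (h0 : W 0 0 = c) (h1 : W 1 0 = c)
    (hW : ∀ n t, W (n + 2) t = W (n + 1) t + b (n + 1) * t * W n t) :
    ∀ n, W n 0 = c := by
  have key : ∀ n, W n 0 = c ∧ W (n+1) 0 = c := by
    intro n
    induction n with
    | zero => exact ⟨h0, h1⟩
    | succ n ih =>
      refine ⟨ih.2, ?_⟩
      rw [hW n 0]
      simp [ih.2]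
  exact fun n => (key n).1

/-- the convergents expressed by the tails, as exact Lean division. -/
lemma convergent_eq {U V : ℕ → ℂ → ℂ}
    (hU : ∀ n t, U (n + 2) t = U (n + 1) t + b (n + 1) * t * U n t)
    (hV : ∀ n t, V (n + 2) t = V (n + 1) t + b (n + 1) * t * V n t)
    (k m : ℕ) (hm : 1 ≤ m) (H : ∀ j, m ≤ j → ‖b j‖ * ‖t‖ ≤ 1/8) :
    U (m+k) t / V (m+k) t
      = (U m t + tau b k m t * U (m-1) t) / (V m t + tau b k m t * V (m-1) t) := by
  rw [← pair_identity hU k m hm H, ← pair_identity hV k m hm H]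
  exact mul_div_mul_right _ _ (Pk_ne k m H)

end Poly

end VanVleck

open VanVleck Metric

set_option maxHeartbeats 1000000 in
/-- **Van Vleck's extension of Stieltjes' theorem to complex coefficients.** If the
complex coefficients `b_n` of the continued fraction `b₀/(1 + b₁t/(1 + b₂t/(1 + ⋯)))`
tend to `0`, then the convergents `U_n/V_n` converge locally uniformly off a set
`S` with no accumulation point in `ℂ` to a function holomorphic on `ℂ \ S`; thus
the continued fraction converges to a meromorphic function. -/
theorem van_vleck_meromorphic_of_tendsto_zero
    (b : ℕ → ℂ) (hb : Tendsto b atTop (nhds 0))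
    (U V : ℕ → ℂ → ℂ)
    (hU0 : ∀ t, U 0 t = 0) (hU1 : ∀ t, U 1 t = b 0)
    (hV0 : ∀ t, V 0 t = 1) (hV1 : ∀ t, V 1 t = 1)
    (hU : ∀ n t, U (n + 2) t = U (n + 1) t + b (n + 1) * t * U n t)
    (hV : ∀ n t, V (n + 2) t = V (n + 1) t + b (n + 1) * t * V n t) :
    ∃ (S : Set ℂ) (F : ℂ → ℂ),
      (∀ z : ℂ, ¬ AccPt z (Filter.principal S)) ∧
      DifferentiableOn ℂ F Sᶜ ∧
      TendstoLocallyUniformlyOn (fun n t => U n t / V n t) F atTop Sᶜ := by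
  classical
  -- cutoffs
  have hNex : ∀ m : ℕ, ∃ Nm : ℕ, ∀ j, Nm ≤ j → ‖b j‖ * ((m:ℝ)+1) ≤ 1/8 := by
    intro m
    have hpos : (0:ℝ) < 1/(8*((m:ℝ)+1)) := by positivity
    obtain ⟨Nm, hNm⟩ := (Metric.tendsto_atTop.mp hb) _ hpos
    refine ⟨Nm, fun j hj => ?_⟩
    have h1 := hNm j hj
    rw [dist_zero_right] at h1
    have hm1 : (0:ℝ) < (m:ℝ)+1 := by positivity
    have h2 : ‖b j‖ * ((m:ℝ)+1) < (1/(8*((m:ℝ)+1))) * ((m:ℝ)+1) :=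
      mul_lt_mul_of_pos_right h1 hm1
    have h3 : (1/(8*((m:ℝ)+1))) * ((m:ℝ)+1) = 1/8 := by field_simp
    linarith
  choose N hN using hNex
  -- base indices, numerators, denominators
  set base : ℕ → ℕ := fun m => N m + 1 with hbase
  set num : ℕ → ℂ → ℂ := fun m t =>
    U (base m) t + gl b (base m) t * U (base m - 1) t with hnum
  set den : ℕ → ℂ → ℂ := fun m t =>
    V (base m) t + gl b (base m) t * V (base m - 1) t with hden
  -- bounds on balls
  have hbase1 : ∀ m, 1 ≤ base m := fun m => Nat.le_add_left 1 (N m)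
  have hbnd : ∀ (m : ℕ) (t : ℂ), t ∈ ball (0:ℂ) ((m:ℝ)+1) →
      ∀ j, base m ≤ j → ‖b j‖ * ‖t‖ ≤ 1/8 := by
    intro m t ht
    exact bnd_of_mem_ball (hN m) ht (Nat.le_succ _)
  have hball : ∀ t : ℂ, t ∈ ball (0:ℂ) ((⌊‖t‖⌋₊ : ℝ)+1) := by
    intro t
    rw [mem_ball_zero_iff]
    exact_mod_cast Nat.lt_floor_add_one ‖t‖
  -- consistency between two base points (ordered version)
  have hcons' : ∀ m1 m2 : ℕ, base m1 ≤ base m2 → ∀ t : ℂ,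
      t ∈ ball (0:ℂ) ((m1:ℝ)+1) →
      ∃ P : ℂ, P ≠ 0 ∧ num m1 t = num m2 t * P ∧ den m1 t = den m2 t * P := by
    intro m1 m2 hle t ht1
    set s := base m2 - base m1 with hs
    have hsum : base m1 + s = base m2 := by omega
    have H1 := hbnd m1 t ht1
    have e1 := chain_identity (b := b) (t := t) hU s (base m1) (hbase1 m1) H1
    have e2 := chain_identity (b := b) (t := t) hV s (base m1) (hbase1 m1) H1
    rw [hsum] at e1 e2
    exact ⟨Pg b s (base m1) t, Pg_ne s (base m1) H1, e1, e2⟩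
  have hcons : ∀ m1 m2 : ℕ, ∀ t : ℂ,
      t ∈ ball (0:ℂ) ((m1:ℝ)+1) → t ∈ ball (0:ℂ) ((m2:ℝ)+1) →
      ∃ P : ℂ, P ≠ 0 ∧ num m1 t = num m2 t * P ∧ den m1 t = den m2 t * P := by
    intro m1 m2 t ht1 ht2
    rcases le_total (base m1) (base m2) with h | h
    · exact hcons' m1 m2 h t ht1
    · obtain ⟨P, hP, e1, e2⟩ := hcons' m2 m1 h t ht2
      refine ⟨P⁻¹, inv_ne_zero hP, ?_, ?_⟩
      · rw [e1]; field_simp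
      · rw [e2]; field_simp
  -- derived consistency facts
  have hdeniff : ∀ m1 m2 : ℕ, ∀ t : ℂ,
      t ∈ ball (0:ℂ) ((m1:ℝ)+1) → t ∈ ball (0:ℂ) ((m2:ℝ)+1) →
      den m1 t = 0 → den m2 t = 0 := by
    intro m1 m2 t ht1 ht2 h0
    obtain ⟨P, hP, _, e2⟩ := hcons m2 m1 t ht2 ht1
    rw [h0, zero_mul] at e2
    exact e2
  have hFeq : ∀ m1 m2 : ℕ, ∀ t : ℂ,
      t ∈ ball (0:ℂ) ((m1:ℝ)+1) → t ∈ ball (0:ℂ) ((m2:ℝ)+1) →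
      num m1 t / den m1 t = num m2 t / den m2 t := by
    intro m1 m2 t ht1 ht2
    obtain ⟨P, hP, e1, e2⟩ := hcons m1 m2 t ht1 ht2
    rw [e1, e2, mul_div_mul_right _ _ hP]
  -- the exceptional set and limit function
  set S : Set ℂ :=
    ⋃ m : ℕ, {t : ℂ | t ∈ ball (0:ℂ) ((m:ℝ)+1) ∧ den m t = 0} with hS
  set F : ℂ → ℂ := fun t => num ⌊‖t‖⌋₊ t / den ⌊‖t‖⌋₊ t with hF
  have hSmem : ∀ t : ℂ, t ∈ S ↔ den ⌊‖t‖⌋₊ t = 0 := by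
    intro t
    constructor
    · rintro ht
      rw [hS, Set.mem_iUnion] at ht
      obtain ⟨m, hm, h0⟩ := ht
      exact hdeniff m ⌊‖t‖⌋₊ t hm (hball t) h0
    · intro h0
      rw [hS, Set.mem_iUnion]
      exact ⟨⌊‖t‖⌋₊, hball t, h0⟩
  -- differentiability of U, V, num, den
  have hUdiff : ∀ n, Differentiable ℂ (U n) := by
    refine diff_W ?_ ?_ hU
    · have : U 0 = fun _ => (0:ℂ) := funext hU0
      rw [this]; exact differentiable_const _
    · have : U 1 = fun _ => b 0 := funext hU1
      rw [this]; exact differentiable_const _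
  have hVdiff : ∀ n, Differentiable ℂ (V n) := by
    refine diff_W ?_ ?_ hV
    · have : V 0 = fun _ => (1:ℂ) := funext hV0
      rw [this]; exact differentiable_const _
    · have : V 1 = fun _ => (1:ℂ) := funext hV1
      rw [this]; exact differentiable_const _
  have hgl_diff : ∀ m, DifferentiableOn ℂ (gl b (base m)) (ball (0:ℂ) ((m:ℝ)+1)) :=
    fun m => diff_gl (hN m) (Nat.le_succ _)
  have hnumdiff : ∀ m, DifferentiableOn ℂ (num m) (ball (0:ℂ) ((m:ℝ)+1)) := by
    intro m
    exact ((hUdiff (base m)).differentiableOn).add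
      ((hgl_diff m).mul ((hUdiff (base m - 1)).differentiableOn))
  have hdendiff : ∀ m, DifferentiableOn ℂ (den m) (ball (0:ℂ) ((m:ℝ)+1)) := by
    intro m
    exact ((hVdiff (base m)).differentiableOn).add
      ((hgl_diff m).mul ((hVdiff (base m - 1)).differentiableOn))
  have hV0' : ∀ n, V n 0 = 1 := W_zero_eq (b := b) (hV0 0) (hV1 0) hV
  have hden0 : ∀ m, den m 0 = 1 := by
    intro m
    rw [hden]
    simp only [hV0', gl_zero_t]
    ring
  have hzeroball : ∀ m : ℕ, (0:ℂ) ∈ ball (0:ℂ) ((m:ℝ)+1) := by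
    intro m; rw [mem_ball_zero_iff]; simp; positivity
  -- local structure around points not in S
  have hloc : ∀ t0 : ℂ, t0 ∉ S → ∃ r > 0, ∀ t ∈ ball t0 r,
      t ∈ ball (0:ℂ) ((⌊‖t0‖⌋₊:ℝ)+1) ∧ den ⌊‖t0‖⌋₊ t ≠ 0 ∧ t ∉ S ∧
        F t = num ⌊‖t0‖⌋₊ t / den ⌊‖t0‖⌋₊ t := by
    intro t0 ht0
    set mz := ⌊‖t0‖⌋₊ with hmz
    have hne : den mz t0 ≠ 0 := fun h => ht0 ((hSmem t0).mpr h)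
    have hcontat : ContinuousAt (den mz) t0 :=
      ((hdendiff mz).continuousOn).continuousAt
        (isOpen_ball.mem_nhds (hball t0))
    have hEV : ∀ᶠ t in 𝓝 t0, t ∈ ball (0:ℂ) ((mz:ℝ)+1) ∧ den mz t ≠ 0 :=
      (isOpen_ball.eventually_mem (hball t0)).and (hcontat.eventually_ne hne)
    obtain ⟨r, hr, hrE⟩ := Metric.eventually_nhds_iff_ball.mp hEV
    refine ⟨r, hr, fun t ht => ?_⟩
    obtain ⟨htb, htne⟩ := hrE t ht
    have htS : t ∉ S := by
      intro htS
      exact htne (hdeniff ⌊‖t‖⌋₊ mz t (hball t) htb ((hSmem t).mp htS))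
    exact ⟨htb, htne, htS, hFeq ⌊‖t‖⌋₊ mz t (hball t) htb⟩
  refine ⟨S, F, ?_, ?_, ?_⟩
  · -- no accumulation points
    intro z hz
    set mz := ⌊‖z‖⌋₊ with hmz
    have hzball : z ∈ ball (0:ℂ) ((mz:ℝ)+1) := hball z
    have han : AnalyticOnNhd ℂ (den mz) (ball (0:ℂ) ((mz:ℝ)+1)) :=
      (hdendiff mz).analyticOnNhd isOpen_ball
    have hnot : ¬ (∀ᶠ t in 𝓝 z, den mz t = 0) := by
      intro hev
      have := han.eqOn_zero_of_preconnected_of_eventuallyEq_zero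
        ((convex_ball (0:ℂ) ((mz:ℝ)+1)).isPreconnected) hzball hev
      have h0 := this (hzeroball mz)
      rw [hden0 mz] at h0
      simp at h0
    have hev2 : ∀ᶠ t in 𝓝[≠] z, den mz t ≠ 0 :=
      ((han z hzball).eventually_eq_zero_or_eventually_ne_zero).resolve_left hnot
    rw [eventually_nhdsWithin_iff] at hev2
    have hev3 : ∀ᶠ t in 𝓝 z, ¬ (t ≠ z ∧ t ∈ S) := by
      filter_upwards [hev2, isOpen_ball.eventually_mem hzball] with t h1 h2
      rintro ⟨hne, htS⟩
      exact h1 (by simpa using hne) (hdeniff ⌊‖t‖⌋₊ mz t (hball t) h2 ((hSmem t).mp htS))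
    have := accPt_iff_frequently.mp hz
    exact this hev3
  · -- differentiability
    intro t0 ht0
    have ht0' : t0 ∉ S := ht0
    obtain ⟨r, hr, hloc0⟩ := hloc t0 ht0'
    set mz := ⌊‖t0‖⌋₊ with hmz
    have hdat : DifferentiableAt ℂ (fun t => num mz t / den mz t) t0 := by
      have h1 : DifferentiableAt ℂ (num mz) t0 :=
        ((hnumdiff mz).differentiableAt (isOpen_ball.mem_nhds (hball t0)))
      have h2 : DifferentiableAt ℂ (den mz) t0 :=
        ((hdendiff mz).differentiableAt (isOpen_ball.mem_nhds (hball t0)))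
      exact h1.div h2 (hloc0 t0 (mem_ball_self hr)).2.1
    have heq : F =ᶠ[𝓝 t0] fun t => num mz t / den mz t := by
      filter_upwards [ball_mem_nhds t0 hr] with t ht
      exact (hloc0 t ht).2.2.2
    exact (hdat.congr_of_eventuallyEq heq).differentiableWithinAt
  · -- locally uniform convergence
    rw [Metric.tendstoLocallyUniformlyOn_iff]
    intro ε hε x hx
    have hx' : x ∉ S := hx
    obtain ⟨r, hr, hloc0⟩ := hloc x hx'
    set mz := ⌊‖x‖⌋₊ with hmz
    set K := closedBall x (r/2) with hKdef
    have hKsub : K ⊆ ball x r := closedBall_subset_ball (by linarith)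
    have hKball : K ⊆ ball (0:ℂ) ((mz:ℝ)+1) := fun y hy => (hloc0 y (hKsub hy)).1
    have hKcpt : IsCompact K := isCompact_closedBall x (r/2)
    have hdencont : ContinuousOn (den mz) K := ((hdendiff mz).continuousOn).mono hKball
    obtain ⟨c, hc0, hc⟩ : ∃ c, 0 < c ∧ ∀ y ∈ K, c ≤ ‖den mz y‖ :=
      hKcpt.exists_forall_le' hdencont.norm
        (fun y hy => norm_pos_iff.mpr (hloc0 y (hKsub hy)).2.1)
    obtain ⟨D1, hD1⟩ := hKcpt.exists_bound_of_continuousOn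
      (((hnumdiff mz).continuousOn).mono hKball)
    obtain ⟨D2, hD2⟩ := hKcpt.exists_bound_of_continuousOn hdencont
    obtain ⟨D3, hD3⟩ := hKcpt.exists_bound_of_continuousOn
      ((hUdiff (base mz - 1)).continuous.continuousOn)
    obtain ⟨D4, hD4⟩ := hKcpt.exists_bound_of_continuousOn
      ((hVdiff (base mz - 1)).continuous.continuousOn)
    set D := max 1 (max (max D1 D2) (max D3 D4)) with hD
    have hD0 : (0:ℝ) < D := lt_of_lt_of_le one_pos (le_max_left _ _)
    have hD1' : ∀ y ∈ K, ‖num mz y‖ ≤ D := fun y hy => (hD1 y hy).trans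
      (((le_max_left D1 D2).trans (le_max_left _ _)).trans (le_max_right _ _))
    have hD2' : ∀ y ∈ K, ‖den mz y‖ ≤ D := fun y hy => (hD2 y hy).trans
      (((le_max_right D1 D2).trans (le_max_left _ _)).trans (le_max_right _ _))
    have hD3' : ∀ y ∈ K, ‖U (base mz - 1) y‖ ≤ D := fun y hy => (hD3 y hy).trans
      (((le_max_left D3 D4).trans (le_max_right _ _)).trans (le_max_right _ _))
    have hD4' : ∀ y ∈ K, ‖V (base mz - 1) y‖ ≤ D := fun y hy => (hD4 y hy).trans
      (((le_max_right D3 D4).trans (le_max_right _ _)).trans (le_max_right _ _))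
    have hεa : (0:ℝ) < min (c/(2*D)) (ε*c*c/(8*D*D)) := by positivity
    have htend : Tendsto (fun k : ℕ => (1/4:ℝ)*(1/2)^k) atTop (𝓝 0) := by
      simpa using (tendsto_pow_atTop_nhds_zero_of_lt_one (by norm_num : (0:ℝ) ≤ 1/2)
        (by norm_num)).const_mul (1/4:ℝ)
    obtain ⟨k0, hk0⟩ := eventually_atTop.mp (htend.eventually (gt_mem_nhds hεa))
    refine ⟨ball x (r/2), mem_nhdsWithin_of_mem_nhds (ball_mem_nhds x (by positivity)), ?_⟩
    filter_upwards [eventually_ge_atTop (base mz + k0)] with n hn y hy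
    have hyK : y ∈ K := ball_subset_closedBall hy
    have hyb : y ∈ ball (0:ℂ) ((mz:ℝ)+1) := hKball hyK
    have hyr : y ∈ ball x r := hKsub hyK
    set k := n - base mz with hk
    have hkn : n = base mz + k := by omega
    have hk0' : k0 ≤ k := by omega
    have H := hbnd mz y hyb
    have hconv : U n y / V n y
        = (U (base mz) y + tau b k (base mz) y * U (base mz - 1) y) /
          (V (base mz) y + tau b k (base mz) y * V (base mz - 1) y) := by
      rw [hkn]
      exact convergent_eq hU hV k (base mz) (hbase1 mz) H
    set δ := (1/4:ℝ)*(1/2)^k with hδdef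
    have hδεa : δ < min (c/(2*D)) (ε*c*c/(8*D*D)) := hk0 k hk0'
    have hδ0 : 0 ≤ δ := by positivity
    have htg : ‖gl b (base mz) y - tau b k (base mz) y‖ ≤ δ := by
      have h1 := dist_tau_gl (b := b) (t := y) k (base mz) H
      rw [dist_comm, dist_eq_norm] at h1
      exact h1
    set numk := U (base mz) y + tau b k (base mz) y * U (base mz - 1) y with hnumk
    set denk := V (base mz) y + tau b k (base mz) y * V (base mz - 1) y with hdenkdef
    have hdd : ‖den mz y - denk‖ ≤ δ * D := by
      have e : den mz y - denk
          = (gl b (base mz) y - tau b k (base mz) y) * V (base mz - 1) y := by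
        rw [hden, hdenkdef]; ring
      rw [e, norm_mul]
      exact mul_le_mul htg (hD4' y hyK) (norm_nonneg _) hδ0
    have hnn : ‖num mz y - numk‖ ≤ δ * D := by
      have e : num mz y - numk
          = (gl b (base mz) y - tau b k (base mz) y) * U (base mz - 1) y := by
        rw [hnum, hnumk]; ring
      rw [e, norm_mul]
      exact mul_le_mul htg (hD3' y hyK) (norm_nonneg _) hδ0
    have hcy : c ≤ ‖den mz y‖ := hc y hyK
    have hδD : δ * D < c/2 := by
      have h1 : δ < c/(2*D) := lt_of_lt_of_le hδεa (min_le_left _ _)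
      have h2 : δ * D < (c/(2*D)) * D := by nlinarith
      have h3 : (c/(2*D)) * D = c/2 := by field_simp
      linarith
    have hdenk_lb : c/2 ≤ ‖denk‖ := by
      have h1 : ‖den mz y‖ - ‖denk‖ ≤ ‖den mz y - denk‖ := norm_sub_norm_le _ _
      linarith
    have hdenkne : denk ≠ 0 := by
      intro h
      rw [h, norm_zero] at hdenk_lb
      linarith
    have hdenne : den mz y ≠ 0 := (hloc0 y hyr).2.1
    have hFy : F y = num mz y / den mz y := (hloc0 y hyr).2.2.2
    have hdiff2 : F y - U n y / V n y
        = (num mz y * (denk - den mz y) + (num mz y - numk) * den mz y)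
          / (den mz y * denk) := by
      rw [hFy, hconv, div_sub_div _ _ hdenne hdenkne]
      congr 1
      ring
    rw [dist_eq_norm, hdiff2, norm_div]
    have hnum_ub : ‖num mz y * (denk - den mz y) + (num mz y - numk) * den mz y‖
        ≤ 2 * (δ * D) * D := by
      calc ‖num mz y * (denk - den mz y) + (num mz y - numk) * den mz y‖
          ≤ ‖num mz y * (denk - den mz y)‖ + ‖(num mz y - numk) * den mz y‖ :=
            norm_add_le _ _
        _ = ‖num mz y‖ * ‖denk - den mz y‖ + ‖num mz y - numk‖ * ‖den mz y‖ := by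
            rw [norm_mul, norm_mul]
        _ ≤ D * (δ * D) + (δ * D) * D := by
            have h1 : ‖denk - den mz y‖ ≤ δ * D := by rwa [norm_sub_rev]
            have h2 := hD1' y hyK
            have h3 := hD2' y hyK
            nlinarith [norm_nonneg (num mz y), norm_nonneg (den mz y),
              norm_nonneg (denk - den mz y), norm_nonneg (num mz y - numk)]
        _ = 2 * (δ * D) * D := by ring
    have hden_lb : c * (c/2) ≤ ‖den mz y * denk‖ := by
      rw [norm_mul]
      have := mul_le_mul hcy hdenk_lb (by linarith) (norm_nonneg _)
      linarith
    have hfinal : ‖num mz y * (denk - den mz y) + (num mz y - numk) * den mz y‖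
        / ‖den mz y * denk‖ ≤ (2 * (δ * D) * D) / (c * (c/2)) := by
      apply div_le_div₀ (by positivity) hnum_ub (by positivity) hden_lb
    have hδε : δ < ε*c*c/(8*D*D) := lt_of_lt_of_le hδεa (min_le_right _ _)
    clear_value numk denk δ k D K mz
    have h8 : δ * (8*D*D) < ε*c*c := by
      have h9 := mul_lt_mul_of_pos_right hδε (show (0:ℝ) < 8*D*D by positivity)
      rwa [div_mul_cancel₀ _ (show (8*D*D : ℝ) ≠ 0 by positivity)] at h9
    have hlast : (2 * (δ * D) * D) / (c * (c/2)) < ε := by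
      rw [div_lt_iff₀ (by positivity)]
      have hpos : (0:ℝ) < ε*c*c := by positivity
      nlinarith [h8, hpos]
    linarith
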